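/- Let V be a finite nonempty set, let S be a subgroup of the group of permutations of V, and let H be the exchangeability graph of S. Let F : ℝ^V → ℝ be convex and strictly convex orthogonal to consensus, and suppose F(y ∘ ψ) = F(y) for every ψ ∈ S and y ∈ ℝ^V, where (y ∘ ψ)_i = y_{ψ(i)}. If y* ∈ ℝ^V is a global minimizer of F, then y* is constant on every connected component of H: for any i, j ∈ V joined by a walk in H, y*_i = y*_j. -/

import Mathlib

/-- The exchangeability graph of a subgroup `S` of permutations of `V`:
distinct vertices `i ≠ j` are adjacent iff some `ψ ∈ S` maps `i` to `j`. -/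
def exchangeabilityGraph {V : Type*} (S : Subgroup (Equiv.Perm V)) : SimpleGraph V where
  Adj i j := i ≠ j ∧ ∃ ψ ∈ S, ψ i = j
  symm := by
    constructor
    rintro i j ⟨hne, ψ, hS, hψ⟩
    exact ⟨hne.symm, ψ⁻¹, S.inv_mem hS, by simp [← hψ]⟩
  loopless := by constructor; rintro i ⟨hne, -⟩; exact hne rfl

theorem stmt8 {V : Type*} [Fintype V] [DecidableEq V] [Nonempty V]
    (S : Subgroup (Equiv.Perm V))
    (F : (V → ℝ) → ℝ)
    (hconv : ConvexOn ℝ Set.univ F)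
    (hstrict : ∀ x z : V → ℝ, x ≠ z → (∑ i, x i) = (∑ i, z i) → ∀ s : ℝ, 0 < s → s < 1 →
      F (s • x + (1 - s) • z) < s * F x + (1 - s) * F z)
    (hinv : ∀ ψ ∈ S, ∀ y : V → ℝ, F (fun i => y (ψ i)) = F y)
    (ystar : V → ℝ) (hmin : ∀ y : V → ℝ, F ystar ≤ F y) :
    ∀ i j : V, (exchangeabilityGraph S).Reachable i j → ystar i = ystar j := by
  have key : ∀ ψ ∈ S, ∀ i, ystar (ψ i) = ystar i := by
    intro ψ hψ
    have hFx : F (fun i => ystar (ψ i)) = F ystar := hinv ψ hψ ystar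
    by_contra h
    push_neg at h
    obtain ⟨i, hi⟩ := h
    have hne : (fun i => ystar (ψ i)) ≠ ystar := fun he => hi (congrFun he i)
    have hsum : (∑ i, ystar (ψ i)) = ∑ i, ystar i := Equiv.sum_comp ψ ystar
    have hlt := hstrict _ _ hne hsum (1/2) (by norm_num) (by norm_num)
    rw [hFx] at hlt
    have h2 : (1/2 : ℝ) * F ystar + (1 - 1/2) * F ystar = F ystar := by ring
    rw [h2] at hlt
    exact absurd (hmin _) (not_le.mpr hlt)
  intro i j hr
  obtain ⟨w⟩ := hr
  induction w with
  | nil => rfl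
  | cons h p ih =>
    obtain ⟨-, ψ, hψ, he⟩ := h
    rw [← ih, ← he]
    exact (key ψ hψ _).symm
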